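/- Let n ≥ 2, let ε̃ ∈ (0, 1], let s* = (1/2)·√(2n·log(2n/ε̃)), and let w be a positive integer with w ≤ ε̃·√n / (16·√(2·log(2n/ε̃))), w < n/4, and s* + w < n/2. Then for every integer ℓ with n/2 − s* ≤ ℓ < n/2 and every integer i with 1 ≤ i ≤ w, the product ∏_{j=0}^{i−1} (n−ℓ−j)/(ℓ+i−j) satisfies 1 − ε̃/2 ≤ ∏_{j=0}^{i−1} (n−ℓ−j)/(ℓ+i−j) ≤ 1 + ε̃/2. -/

import Mathlib

set_option maxHeartbeats 1000000 in


/-- For `n ≥ 2`, `ε̃ ∈ (0,1]`, `s* = (1/2)√(2n·log(2n/ε̃))` and a positive integer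
`w ≤ ε̃√n/(16√(2log(2n/ε̃)))` with `w < n/4` and `s* + w < n/2`: for every integer `ℓ`
with `n/2 − s* ≤ ℓ < n/2` and every integer `i` with `1 ≤ i ≤ w`,
`1 − ε̃/2 ≤ Π_{j=0}^{i−1} (n−ℓ−j)/(ℓ+i−j) ≤ 1 + ε̃/2`. -/
theorem product_bounds_below_middle (n : ℕ) (hn : 2 ≤ n)
    (εt : ℝ) (hεt0 : 0 < εt) (hεt1 : εt ≤ 1)
    (s : ℝ) (hs : s = (1 / 2) * Real.sqrt (2 * n * Real.log (2 * n / εt)))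
    (w : ℕ) (hw0 : 1 ≤ w)
    (hw1 : (w : ℝ) ≤ εt * Real.sqrt n / (16 * Real.sqrt (2 * Real.log (2 * n / εt))))
    (hw2 : (w : ℝ) < n / 4) (hws : s + w < n / 2) :
    ∀ ℓ : ℕ, (n : ℝ) / 2 - s ≤ ℓ → (ℓ : ℝ) < n / 2 →
      ∀ i : ℕ, 1 ≤ i → i ≤ w →
        1 - εt / 2 ≤ ∏ j ∈ Finset.range i, ((n : ℝ) - ℓ - j) / ((ℓ : ℝ) + i - j) ∧
        ∏ j ∈ Finset.range i, ((n : ℝ) - ℓ - j) / ((ℓ : ℝ) + i - j) ≤ 1 + εt / 2 := by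
  intro ℓ hℓ1 hℓ2 i hi1 hi2
  set L := Real.log (2 * n / εt) with hLdef
  have hn0 : (2:ℝ) ≤ n := by exact_mod_cast hn
  have hεn : (4:ℝ) ≤ 2 * n / εt := by
    rw [le_div_iff₀ hεt0]; nlinarith
  have hL1 : (1:ℝ) ≤ L := by
    rw [hLdef, Real.le_log_iff_exp_le (by linarith)]
    calc Real.exp 1 ≤ 2.7182818286 := Real.exp_one_lt_d9.le
    _ ≤ 4 := by norm_num
    _ ≤ 2 * n / εt := hεn
  have h2L : (0:ℝ) < 2 * L := by linarith
  have hsqrt2Lpos : 0 < Real.sqrt (2 * L) := Real.sqrt_pos.mpr h2L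
  have hsq2L : Real.sqrt (2 * L) ^ 2 = 2 * L := Real.sq_sqrt h2L.le
  have hsqn : Real.sqrt n ^ 2 = n := Real.sq_sqrt (by linarith)
  have hsqnn : (0:ℝ) ≤ Real.sqrt n := Real.sqrt_nonneg _
  have hs' : s = Real.sqrt n * Real.sqrt (2 * L) / 2 := by
    rw [hs, show 2 * (n:ℝ) * L = n * (2 * L) by ring, Real.sqrt_mul (by linarith : (0:ℝ) ≤ (n:ℝ))]
    ring
  have hs0 : 0 ≤ s := by rw [hs']; positivity
  have hwpos : (1:ℝ) ≤ w := by exact_mod_cast hw0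
  have hw1' : (w:ℝ) * (16 * Real.sqrt (2 * L)) ≤ εt * Real.sqrt n := by
    rw [← le_div_iff₀ (by positivity)]; exact hw1
  have h16 : 16 * Real.sqrt (2 * L) ≤ εt * Real.sqrt n := by nlinarith
  have hLn : 512 * L ≤ n := by
    have h := mul_self_le_mul_self (by positivity : (0:ℝ) ≤ 16 * Real.sqrt (2 * L)) h16
    nlinarith [sq_nonneg (Real.sqrt n)]
  have hss : s ^ 2 = n * L / 2 := by
    rw [hs', div_pow, mul_pow, hsqn, hsq2L]; ring
  have hsn : s ≤ (n:ℝ) / 32 := by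
    have hsq : s ^ 2 ≤ ((n:ℝ) / 32) ^ 2 := by nlinarith [hss, hLn, hn0]
    have h := Real.sqrt_le_sqrt hsq
    rwa [Real.sqrt_sq hs0, Real.sqrt_sq (by linarith : (0:ℝ) ≤ (n:ℝ)/32)] at h
  have hws_prod : (w:ℝ) * s ≤ εt * n / 32 := by
    rw [hs']
    nlinarith [mul_le_mul_of_nonneg_right hw1' hsqnn]
  have hwss : (w:ℝ) ≤ εt * s / 16 := by
    rw [hs']
    have h1 : εt * Real.sqrt n / (16 * Real.sqrt (2 * L)) ≤ εt * (Real.sqrt n * Real.sqrt (2 * L) / 2) / 16 := by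
      rw [div_le_iff₀ (by positivity)]
      nlinarith [hεt0.le]
    linarith [hw1]
  have hw2sq : (w:ℝ) ^ 2 ≤ εt * n / 512 := by
    nlinarith [mul_le_mul_of_nonneg_left hwss (by linarith : (0:ℝ) ≤ (w:ℝ)),
      mul_le_mul_of_nonneg_left hws_prod hεt0.le]
  clear hw1 hw1' h16 hLn hss hs' hεn hL1 h2L hsqrt2Lpos hsq2L hsqn hsqnn hs hLdef
  -- per ℓ, i
  have hiw : (i:ℝ) ≤ w := by exact_mod_cast hi2
  have hi1' : (1:ℝ) ≤ i := by exact_mod_cast hi1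
  have hl15 : 15 * (n:ℝ) / 32 ≤ (ℓ:ℝ) := by linarith
  have hℓ1pos : (0:ℝ) < (ℓ:ℝ) + 1 := by linarith
  set δ := (2 * s + w) / ((ℓ:ℝ) + 1) with hδdef
  have hδ0 : 0 ≤ δ := by
    apply div_nonneg _ hℓ1pos.le; linarith
  have hδeq : δ * ((ℓ:ℝ) + 1) = 2 * s + w := by
    rw [hδdef]; field_simp [hℓ1pos.ne']
  have hidelta : (i:ℝ) * δ ≤ εt / 6 := by
    rw [hδdef, ← mul_div_assoc, div_le_iff₀ hℓ1pos]
    nlinarith [mul_le_mul_of_nonneg_right hiw (by linarith : (0:ℝ) ≤ 2 * s + w),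
      mul_le_mul_of_nonneg_left hl15 hεt0.le]
  have hδεt : δ ≤ εt / 6 := by nlinarith
  have hδ16 : δ ≤ 1 / 6 := by linarith
  -- n - 2ℓ ≥ 1
  have h2ln : 2 * ℓ + 1 ≤ n := by
    have : 2 * ℓ < n := by exact_mod_cast (by push_cast; linarith : (2:ℝ) * ℓ < n)
    omega
  have hnl : (1:ℝ) ≤ (n:ℝ) - 2 * ℓ := by
    have : ((2 * ℓ + 1 : ℕ):ℝ) ≤ (n:ℝ) := by exact_mod_cast h2ln
    push_cast at this; linarith
  have hnl2 : (n:ℝ) - 2 * ℓ ≤ 2 * s := by linarith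
  set c : ℝ := (n:ℝ) - 2 * ℓ - i with hcdef
  have hc_ub : c ≤ 2 * s + w := by rw [hcdef]; linarith
  have hc_lb : -(2 * s + w) ≤ c := by rw [hcdef]; linarith
  have hfac : ∀ j ∈ Finset.range i,
      1 - δ ≤ ((n:ℝ) - ℓ - j) / ((ℓ:ℝ) + i - j) ∧
      ((n:ℝ) - ℓ - j) / ((ℓ:ℝ) + i - j) ≤ 1 + δ := by
    intro j hj
    have hji : j + 1 ≤ i := Finset.mem_range.mp hj
    have hj' : (j:ℝ) + 1 ≤ (i:ℝ) := by exact_mod_cast hji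
    have hd : (ℓ:ℝ) + 1 ≤ (ℓ:ℝ) + i - j := by linarith
    have hd0 : (0:ℝ) < (ℓ:ℝ) + i - j := by linarith
    have hfe : ((n:ℝ) - ℓ - j) / ((ℓ:ℝ) + i - j) = 1 + c / ((ℓ:ℝ) + i - j) := by
      rw [hcdef]; field_simp; ring
    have hmono := mul_le_mul_of_nonneg_left hd hδ0
    constructor
    · rw [hfe]
      have h1 : -δ ≤ c / ((ℓ:ℝ) + i - j) := by
        rw [le_div_iff₀ hd0]; linarith [hmono, hδeq, hc_lb]
      linarith
    · rw [hfe]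
      have h1 : c / ((ℓ:ℝ) + i - j) ≤ δ := by
        rw [div_le_iff₀ hd0]; linarith [hmono, hδeq, hc_ub]
      linarith
  have hlow : (1 - δ) ^ i ≤ ∏ j ∈ Finset.range i, ((n:ℝ) - ℓ - j) / ((ℓ:ℝ) + i - j) := by
    calc (1 - δ) ^ i = ∏ _j ∈ Finset.range i, (1 - δ) := by
          rw [Finset.prod_const, Finset.card_range]
    _ ≤ _ := Finset.prod_le_prod (fun j _ => by linarith) (fun j hj => (hfac j hj).1)
  have hhigh : ∏ j ∈ Finset.range i, ((n:ℝ) - ℓ - j) / ((ℓ:ℝ) + i - j) ≤ (1 + δ) ^ i := by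
    calc ∏ j ∈ Finset.range i, ((n:ℝ) - ℓ - j) / ((ℓ:ℝ) + i - j)
        ≤ ∏ _j ∈ Finset.range i, (1 + δ) :=
          Finset.prod_le_prod (fun j hj => le_trans (by linarith) (hfac j hj).1)
            (fun j hj => (hfac j hj).2)
    _ = (1 + δ) ^ i := by rw [Finset.prod_const, Finset.card_range]
  have hbern : 1 - (i:ℝ) * δ ≤ (1 - δ) ^ i := by
    have h := one_add_mul_le_pow (show (-2:ℝ) ≤ -δ by linarith) i
    calc 1 - (i:ℝ) * δ = 1 + (i:ℝ) * (-δ) := by ring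
    _ ≤ (1 + -δ) ^ i := h
    _ = (1 - δ) ^ i := by ring_nf
  have hpos : (0:ℝ) < 1 - (i:ℝ) * δ := by linarith
  have hfinal : 1 / (1 - (i:ℝ) * δ) ≤ 1 + εt / 2 := by
    rw [div_le_iff₀ hpos]
    have key : ((i:ℝ) * δ) * (1 + εt / 2) ≤ (εt / 6) * (1 + εt / 2) :=
      mul_le_mul_of_nonneg_right hidelta (by linarith)
    have hεsq : εt ^ 2 ≤ εt := by nlinarith
    nlinarith [key, hεsq]
  have hδsq1 : δ ^ 2 ≤ 1 := pow_le_one₀ hδ0 (by linarith)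
  have hmul : (1 + δ) ^ i * (1 - δ) ^ i ≤ 1 := by
    rw [← mul_pow, show (1 + δ) * (1 - δ) = 1 - δ ^ 2 by ring]
    exact pow_le_one₀ (by linarith) (by linarith [sq_nonneg δ])
  have hup2 : (1 + δ) ^ i ≤ 1 / (1 - (i:ℝ) * δ) := by
    rw [le_div_iff₀ hpos]
    calc (1 + δ) ^ i * (1 - (i:ℝ) * δ) ≤ (1 + δ) ^ i * (1 - δ) ^ i :=
          mul_le_mul_of_nonneg_left hbern (pow_nonneg (by linarith) i)
    _ ≤ 1 := hmul
  constructor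
  · linarith
  · linarith
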